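/- Let n be a positive integer, ρ ∈ (0,1), and set Ω = √(ρ/(1−ρ)). Let σ_1,…,σ_n ≥ 0, â_1,…,â_n and b be reals, let m be a positive integer with m ≥ √n/2, and set d_j^k = Ω·σ_j/m, f_j^k = 2k−1. Let a_1,…,a_n be independent real random variables on a probability space, each square-integrable, with E[a_j] = â_j and Var(a_j) = σ_j². Then for every x ∈ {0,1}^n satisfying Σ_j â_j x_j + β(x, m²) ≤ b, the probability P(Σ_j a_j x_j ≤ b) satisfies ρ − P(Σ_j a_j x_j ≤ b) ≤ ρ(1−ρ)/(4m²/n − ρ). -/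

import Mathlib

open MeasureTheory ProbabilityTheory

lemma sum_odds (m : ℕ) : ∑ k ∈ Finset.range m, (2*(k:ℝ)+1) = (m:ℝ)^2 := by
  induction m with
  | zero => simp
  | succ m ih => rw [Finset.sum_range_succ, ih]; push_cast; ring

lemma clamp_sum (m : ℕ) (t : ℝ) (h0 : 0 ≤ t) (hm : t ≤ m) :
    ∑ k ∈ Finset.range m, min 1 (max 0 (t - k)) = t := by
  induction m with
  | zero => simp only [Finset.range_zero, Finset.sum_empty]; simp at hm; linarith
  | succ m ih =>
    rw [Finset.sum_range_succ]
    by_cases h : t ≤ m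
    · rw [ih h, max_eq_left (by linarith), min_eq_right (by norm_num)]
      ring
    · push_neg at h
      push_cast at hm
      have h1 : ∀ k ∈ Finset.range m, min 1 (max 0 (t - k)) = 1 := by
        intro k hk
        have hk' : (k:ℝ) ≤ (m:ℝ) - 1 := by
          have := Finset.mem_range.mp hk
          have : (k:ℝ) + 1 ≤ m := by exact_mod_cast this
          linarith
        rw [min_eq_left]
        exact le_max_of_le_right (by linarith)
      rw [Finset.sum_congr rfl h1, Finset.sum_const, max_eq_right (by linarith),
        min_eq_right (by linarith)]
      simp

lemma clamp_cost (m : ℕ) (t : ℝ) (h0 : 0 ≤ t) (hm : t ≤ m) :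
    ∑ k ∈ Finset.range m, (2*(k:ℝ)+1) * min 1 (max 0 (t - k)) ≤ t^2 + 1/4 := by
  induction m with
  | zero => simp; positivity
  | succ m ih =>
    rw [Finset.sum_range_succ]
    by_cases h : t ≤ m
    · rw [max_eq_left (by linarith), min_eq_right (by norm_num)]
      have := ih h
      linarith
    · push_neg at h
      push_cast at hm
      have h1 : ∀ k ∈ Finset.range m, (2*(k:ℝ)+1) * min 1 (max 0 (t - k)) = 2*(k:ℝ)+1 := by
        intro k hk
        have hk' : (k:ℝ) ≤ (m:ℝ) - 1 := by
          have := Finset.mem_range.mp hk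
          have : (k:ℝ) + 1 ≤ m := by exact_mod_cast this
          linarith
        rw [min_eq_left (le_max_of_le_right (by linarith)), mul_one]
      rw [Finset.sum_congr rfl h1, sum_odds, max_eq_right (by linarith),
        min_eq_right (by linarith)]
      push_cast
      nlinarith [sq_nonneg (t - m - 1/2)]

lemma cantelli {Ωs : Type*} [MeasurableSpace Ωs] (P : Measure Ωs) [IsProbabilityMeasure P]
    (Y : Ωs → ℝ) (hY : MemLp Y 2 P) (hmean : ∫ ω, Y ω ∂P = 0)
    (V : ℝ) (hV : ∫ ω, (Y ω)^2 ∂P = V) (c : ℝ) (hc : 0 < c) :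
    (P {ω | c ≤ Y ω}).toReal ≤ V / (V + c^2) := by
  have hV0 : 0 ≤ V := hV ▸ integral_nonneg fun ω => sq_nonneg _
  set t := V / c with ht
  have ht0 : 0 ≤ t := div_nonneg hV0 hc.le
  have hint2 : Integrable (fun ω => (Y ω)^2) P := hY.integrable_sq
  have hint1 : Integrable (fun ω => 2*t*Y ω) P := (hY.integrable one_le_two).const_mul _
  have hexp : (fun ω => (Y ω + t)^2) = fun ω => (Y ω)^2 + (2*t*Y ω + t^2) :=
    funext fun ω => by ring
  have hintf : Integrable (fun ω => (Y ω + t)^2) P := by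
    rw [hexp]; exact hint2.add (hint1.add (integrable_const _))
  have hI2 : ∫ ω, (2*t*Y ω + t^2) ∂P = t^2 := by
    rw [integral_add hint1 (integrable_const _), integral_const_mul, hmean, integral_const]
    simp
  have hint3 : Integrable (fun ω => 2*t*Y ω + t^2) P := hint1.add (integrable_const _)
  have hI : ∫ ω, (Y ω + t)^2 ∂P = V + t^2 := by
    rw [hexp, integral_add hint2 hint3, hI2, hV]
  have hmarkov := mul_meas_ge_le_integral_of_nonneg
    (ae_of_all P fun ω => sq_nonneg (Y ω + t)) hintf ((c+t)^2)
  rw [hI] at hmarkov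
  have hct : 0 < c + t := by linarith
  have hsub : P {ω | c ≤ Y ω} ≤ P {ω | (c+t)^2 ≤ (Y ω + t)^2} := by
    apply measure_mono
    intro ω hω
    have hω' : c ≤ Y ω := hω
    exact pow_le_pow_left₀ hct.le (by linarith) 2
  have h2 : (P {ω | c ≤ Y ω}).toReal ≤ (P {ω | (c+t)^2 ≤ (Y ω + t)^2}).toReal :=
    ENNReal.toReal_mono (measure_ne_top _ _) hsub
  have h3 : (c+t)^2 * (P {ω | c ≤ Y ω}).toReal ≤ V + t^2 := by
    calc (c+t)^2 * (P {ω | c ≤ Y ω}).toReal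
        ≤ (c+t)^2 * (P {ω | (c+t)^2 ≤ (Y ω + t)^2}).toReal := by nlinarith [ENNReal.toReal_nonneg (a := P {ω | c ≤ Y ω})]
      _ ≤ V + t^2 := hmarkov
  have h4 : (P {ω | c ≤ Y ω}).toReal ≤ (V + t^2) / (c+t)^2 := by
    rw [le_div_iff₀ (by positivity)]
    linarith
  have h5 : (V + t^2) / (c+t)^2 = V / (V + c^2) := by
    rw [ht]
    field_simp
    ring
  linarith [h4, h5.symm ▸ h4]

lemma alg_id (ρ V mm nn : ℝ) (hρ : 0 < ρ) (hρ1 : 0 < 1-ρ) (hV : 0 < V) (hm : 0 < mm)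
    (hn : 0 < nn) (hlt : nn < 4*mm^2) (hq : 0 < 4*mm^2/nn - ρ) :
    ρ - (1 - V/(V + ρ/(1-ρ) * (V*(mm^2 - nn/4)) / mm^2)) = ρ*(1-ρ)/(4*mm^2/nn - ρ) := by
  have hden : 0 < V + ρ/(1-ρ)*(V*(mm^2-nn/4))/mm^2 :=
    add_pos hV (div_pos (mul_pos (div_pos hρ hρ1) (mul_pos hV (by linarith))) (by positivity))
  have hA : 0 < 4*mm^2 - ρ*nn := by
    have := (lt_div_iff₀ hn).mp (by linarith : ρ < 4*mm^2/nn)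
    linarith
  have h1 : V/(V + ρ/(1-ρ)*(V*(mm^2-nn/4))/mm^2) = 4*(1-ρ)*mm^2/(4*mm^2 - ρ*nn) := by
    rw [div_eq_div_iff hden.ne' hA.ne']
    field_simp
    ring
  rw [h1]
  have h2 : 4*mm^2/nn - ρ = (4*mm^2 - ρ*nn)/nn := by field_simp
  rw [h2, div_div_eq_mul_div, eq_div_iff hA.ne', sub_mul, sub_mul,
    div_mul_cancel₀ _ hA.ne']
  ring

set_option maxHeartbeats 1000000 in
/-- **Proposition 4.** Distributionally robust probability guarantee for
feasible solutions to (RKPm) with the inner polyhedral approximation, via Cantelli's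
inequality.  Here `Ω = √(ρ/(1−ρ))`, the weights `a_j` are independent square-integrable
random variables with means `â_j` and variances `σ_j²`, `m ≥ √n/2`, and `x ∈ {0,1}^n`
satisfies `Σ_j â_j x_j + β(x,m²) ≤ b`.  Then
`ρ − P(Σ_j a_j x_j ≤ b) ≤ ρ(1−ρ)/(4m²/n − ρ)`. -/
theorem stmt_12 {Ωs : Type*} [MeasurableSpace Ωs] (P : Measure Ωs) [IsProbabilityMeasure P]
    (n : ℕ) (hn : 0 < n) (ρ : ℝ) (hρ : 0 < ρ) (hρ' : ρ < 1)
    (σ : Fin n → ℝ) (hσ : ∀ j, 0 ≤ σ j) (ahat : Fin n → ℝ) (b : ℝ)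
    (m : ℕ) (hm : 0 < m) (hmn : Real.sqrt n / 2 ≤ (m : ℝ))
    (a : Fin n → Ωs → ℝ) (hmeas : ∀ j, Measurable (a j))
    (hindep : iIndepFun a P)
    (hL2 : ∀ j, MemLp (a j) 2 P)
    (hmean : ∀ j, (∫ ω, a j ω ∂P) = ahat j)
    (hvar : ∀ j, variance (a j) P = σ j ^ 2)
    (x : Fin n → ℝ) (hx : ∀ j, x j = 0 ∨ x j = 1) (β : ℝ)
    (hβ : IsGreatest
      {v : ℝ | ∃ z : Fin n → Fin m → ℝ,
        (∀ j k, 0 ≤ z j k ∧ z j k ≤ 1) ∧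
        (∑ j, ∑ k : Fin m, (2 * ((k : ℕ) : ℝ) + 1) * z j k) ≤ (m : ℝ) ^ 2 ∧
        v = ∑ j, ∑ k : Fin m, Real.sqrt (ρ / (1 - ρ)) * σ j / m * x j * z j k} β)
    (hfeas : (∑ j, ahat j * x j) + β ≤ b) :
    ρ - (P {ω | (∑ j, a j ω * x j) ≤ b}).toReal ≤
      ρ * (1 - ρ) / (4 * (m : ℝ) ^ 2 / n - ρ) := by
  classical
  have hρ1 : (0:ℝ) < 1 - ρ := by linarith
  have hx01 : ∀ j, 0 ≤ x j ∧ x j ≤ 1 := fun j => by rcases hx j with h | h <;> simp [h]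
  have hnpos : (0:ℝ) < n := by exact_mod_cast hn
  have hmpos : (0:ℝ) < m := by exact_mod_cast hm
  have hnm : (n:ℝ) ≤ 4*(m:ℝ)^2 := by
    nlinarith [Real.sq_sqrt (show (0:ℝ) ≤ (n:ℝ) by positivity), Real.sqrt_nonneg (n:ℝ)]
  have hqpos : (0:ℝ) < 4*(m:ℝ)^2/n - ρ := by
    have : (1:ℝ) ≤ 4*(m:ℝ)^2/n := (one_le_div hnpos).mpr hnm
    linarith
  have hβ0 : 0 ≤ β := by
    apply hβ.2
    exact ⟨fun _ _ => 0, fun j k => by norm_num, by simp, by simp⟩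
  have hPnn := ENNReal.toReal_nonneg (a := P {ω | (∑ j, a j ω * x j) ≤ b})
  rcases eq_or_lt_of_le hnm with hcrit | hlt
  · -- boundary case 4m² = n
    have h1 : 4*(m:ℝ)^2/n = 1 := by rw [← hcrit]; field_simp
    rw [h1]
    have h2 : ρ * (1-ρ)/(1-ρ) = ρ := by field_simp
    rw [h2]
    linarith
  -- main case: n < 4m²
  set V : ℝ := ∑ j, (σ j * x j)^2 with hVdef
  have hV0 : 0 ≤ V := Finset.sum_nonneg fun j _ => sq_nonneg _
  have hXL2 : ∀ j, MemLp (fun ω => a j ω * x j) 2 P := fun j => by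
    simpa [mul_comm] using (hL2 j).const_mul (x j)
  have hS : (fun ω => ∑ j, a j ω * x j) = ∑ j, (fun ω => a j ω * x j) := by
    funext ω; simp
  have hSL2 : MemLp (fun ω => ∑ j, a j ω * x j) 2 P := by
    rw [hS]; exact memLp_finset_sum' _ fun j _ => hXL2 j
  have hSint : Integrable (fun ω => ∑ j, a j ω * x j) P := hSL2.integrable one_le_two
  have hSmeas : Measurable (fun ω => ∑ j, a j ω * x j) :=
    Finset.measurable_sum _ fun j _ => (hmeas j).mul_const _
  set μv : ℝ := ∑ j, ahat j * x j with hμdef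
  have hμ : ∫ ω, (∑ j, a j ω * x j) ∂P = μv := by
    rw [integral_finset_sum _ fun j _ => ((hL2 j).integrable one_le_two).mul_const _]
    exact Finset.sum_congr rfl fun j _ => by rw [integral_mul_const, hmean j]
  have hVar : variance (fun ω => ∑ j, a j ω * x j) P = V := by
    rw [hS, IndepFun.variance_sum (fun j _ => hXL2 j)
      (fun i _ j hj hij => (hindep.indepFun hij).comp
        (measurable_mul_const (x i)) (measurable_mul_const (x j)))]
    exact Finset.sum_congr rfl fun j _ => by
      have h : (fun ω => a j ω * x j) = fun ω => x j * a j ω := funext fun ω => mul_comm _ _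
      rw [h, variance_const_mul, hvar j]; ring
  set Y : Ωs → ℝ := fun ω => (∑ j, a j ω * x j) - μv with hYdef
  have hYL2 : MemLp Y 2 P := hSL2.sub (memLp_const μv)
  have hYmean : ∫ ω, Y ω ∂P = 0 := by
    rw [hYdef, integral_sub hSint (integrable_const _), hμ, integral_const]
    simp
  have hYsq : ∫ ω, (Y ω)^2 ∂P = V := by
    have hvd := variance_eq_sub hSL2
    rw [hVar] at hvd
    simp only [Pi.pow_apply] at hvd
    rw [hμ] at hvd
    have hSsq : ∫ ω, (∑ j, a j ω * x j)^2 ∂P = V + μv^2 := by linarith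
    have hexp : (fun ω => (Y ω)^2) =
        fun ω => (∑ j, a j ω * x j)^2 + (-(2*μv)*(∑ j, a j ω * x j) + μv^2) :=
      funext fun ω => by rw [hYdef]; ring
    have hint1 : Integrable (fun ω => -(2*μv)*(∑ j, a j ω * x j)) P := hSint.const_mul _
    have hint3 : Integrable (fun ω => -(2*μv)*(∑ j, a j ω * x j) + μv^2) P :=
      hint1.add (integrable_const _)
    have hI2 : ∫ ω, (-(2*μv)*(∑ j, a j ω * x j) + μv^2) ∂P = -(2*μv)*μv + μv^2 := by
      rw [integral_add hint1 (integrable_const _), integral_const_mul, hμ, integral_const]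
      simp
    rw [hexp, integral_add hSL2.integrable_sq hint3, hI2, hSsq]
    ring
  have hms : MeasurableSet {ω | (∑ j, a j ω * x j) ≤ b} :=
    measurableSet_le hSmeas measurable_const
  rcases hV0.eq_or_lt with hVz | hVpos
  · -- degenerate case V = 0 : the sum is a.s. constant
    have h0 : ∫ ω, (Y ω)^2 ∂P = 0 := by rw [hYsq, ← hVz]
    have hae : (fun ω => (Y ω)^2) =ᵐ[P] 0 :=
      (integral_eq_zero_iff_of_nonneg (fun ω => sq_nonneg _) hYL2.integrable_sq).mp h0
    have haeb : ∀ᵐ ω ∂P, (∑ j, a j ω * x j) ≤ b := by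
      filter_upwards [hae] with ω hω
      have h1 : Y ω = 0 := by
        have : (Y ω)^2 = 0 := hω
        nlinarith [sq_nonneg (Y ω)]
      have h2 : (∑ j, a j ω * x j) = μv := by
        have h1' : (∑ j, a j ω * x j) - μv = 0 := h1
        linarith
      linarith [hfeas]
    have hP1 : P {ω | (∑ j, a j ω * x j) ≤ b} = 1 := by
      rw [← prob_compl_eq_zero_iff hms]
      have : {ω | (∑ j, a j ω * x j) ≤ b}ᶜ = {ω | ¬ (∑ j, a j ω * x j) ≤ b} := rfl
      rw [this]
      exact ae_iff.mp haeb
    rw [hP1]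
    have hRHS : 0 ≤ ρ * (1 - ρ) / (4 * (m:ℝ)^2 / n - ρ) :=
      div_nonneg (by nlinarith) hqpos.le
    simp only [ENNReal.toReal_one]
    linarith
  -- main case V > 0
  have hs' : (0:ℝ) < (m:ℝ)^2 - n/4 := by linarith
  set s' : ℝ := (m:ℝ)^2 - (n:ℝ)/4 with hs'def
  set Om : ℝ := Real.sqrt (ρ/(1-ρ)) with hOm
  have hOmpos : 0 < Om := Real.sqrt_pos.mpr (div_pos hρ hρ1)
  have hOmsq : Om^2 = ρ/(1-ρ) := Real.sq_sqrt (div_pos hρ hρ1).le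
  have hsqV : 0 < Real.sqrt V := Real.sqrt_pos.mpr hVpos
  set t : Fin n → ℝ := fun j => Real.sqrt s' * (σ j * x j) / Real.sqrt V with htdef
  have hσx : ∀ j, 0 ≤ σ j * x j := fun j => mul_nonneg (hσ j) (hx01 j).1
  have ht0 : ∀ j, 0 ≤ t j := fun j =>
    div_nonneg (mul_nonneg (Real.sqrt_nonneg _) (hσx j)) (Real.sqrt_nonneg _)
  have htm : ∀ j, t j ≤ m := by
    intro j
    have h1 : (σ j * x j)^2 ≤ V :=
      Finset.single_le_sum (f := fun i => (σ i * x i)^2) (fun i _ => sq_nonneg _)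
        (Finset.mem_univ j)
    have h2 : σ j * x j ≤ Real.sqrt V := by
      rw [show σ j * x j = Real.sqrt ((σ j * x j)^2) from (Real.sqrt_sq (hσx j)).symm]
      exact Real.sqrt_le_sqrt h1
    have h3 : Real.sqrt s' ≤ m := by
      rw [show (m:ℝ) = Real.sqrt ((m:ℝ)^2) from (Real.sqrt_sq hmpos.le).symm]
      exact Real.sqrt_le_sqrt (by rw [hs'def]; linarith)
    calc t j = Real.sqrt s' * ((σ j * x j) / Real.sqrt V) := by rw [htdef]; ring
      _ ≤ Real.sqrt s' * 1 :=
          mul_le_mul_of_nonneg_left ((div_le_one hsqV).mpr h2) (Real.sqrt_nonneg _)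
      _ ≤ m := by rw [mul_one]; exact h3
  set z : Fin n → Fin m → ℝ := fun j k => min 1 (max 0 (t j - ((k:ℕ):ℝ))) with hzdef
  have hz01 : ∀ j k, 0 ≤ z j k ∧ z j k ≤ 1 := fun j k =>
    ⟨le_min zero_le_one (le_max_left _ _), min_le_left _ _⟩
  have hzsum : ∀ j, ∑ k : Fin m, z j k = t j := by
    intro j
    rw [hzdef, Fin.sum_univ_eq_sum_range (fun k => min 1 (max 0 (t j - (k:ℝ)))) m]
    exact clamp_sum m (t j) (ht0 j) (htm j)
  have hcost : ∀ j, ∑ k : Fin m, (2*((k:ℕ):ℝ)+1) * z j k ≤ (t j)^2 + 1/4 := by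
    intro j
    rw [hzdef, Fin.sum_univ_eq_sum_range (fun k => (2*(k:ℝ)+1) * min 1 (max 0 (t j - (k:ℝ)))) m]
    exact clamp_cost m (t j) (ht0 j) (htm j)
  have htsq : ∀ j, (t j)^2 = s' * (σ j * x j)^2 / V := fun j => by
    rw [htdef, div_pow, mul_pow, Real.sq_sqrt hs'.le, Real.sq_sqrt hV0]
  set K : ℝ := Om * Real.sqrt (V * s') / m with hKdef
  have hKpos : 0 < K :=
    div_pos (mul_pos hOmpos (Real.sqrt_pos.mpr (mul_pos hVpos hs'))) hmpos
  have hVsq : Real.sqrt V * Real.sqrt V = V := Real.mul_self_sqrt hV0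
  have htsum : ∑ j, (t j)^2 = s' := by
    rw [Finset.sum_congr rfl fun j _ => htsq j, ← Finset.sum_div, ← Finset.mul_sum, ← hVdef]
    field_simp
  have hcosttot : (∑ j, ∑ k : Fin m, (2*((k:ℕ):ℝ)+1) * z j k) ≤ (m:ℝ)^2 := by
    calc (∑ j, ∑ k : Fin m, (2*((k:ℕ):ℝ)+1) * z j k)
        ≤ ∑ j, ((t j)^2 + 1/4) := Finset.sum_le_sum fun j _ => hcost j
      _ = (∑ j, (t j)^2) + (n:ℝ)/4 := by
          rw [Finset.sum_add_distrib, Finset.sum_const, Finset.card_univ, Fintype.card_fin,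
            nsmul_eq_mul]
          ring
      _ = s' + (n:ℝ)/4 := by rw [htsum]
      _ ≤ (m:ℝ)^2 := by rw [hs'def]; linarith
  have hval : K = ∑ j, ∑ k : Fin m, Om * σ j / m * x j * z j k := by
    have h1 : ∀ j, ∑ k : Fin m, Om * σ j / m * x j * z j k = Om * σ j / m * x j * t j :=
      fun j => by rw [← Finset.mul_sum, hzsum j]
    have e : ∀ j, Om * σ j / m * x j * t j
        = Om * Real.sqrt s' / (m * Real.sqrt V) * (σ j * x j)^2 := by
      intro j
      rw [htdef]
      field_simp
    rw [Finset.sum_congr rfl fun j _ => h1 j, Finset.sum_congr rfl fun j _ => e j,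
      ← Finset.mul_sum, ← hVdef, hKdef, Real.sqrt_mul hV0]
    have hVsq2 : Real.sqrt V ^ 2 = V := Real.sq_sqrt hV0
    field_simp
    linear_combination hVsq2
  have hKmem : ∃ zz : Fin n → Fin m → ℝ,
      (∀ j k, 0 ≤ zz j k ∧ zz j k ≤ 1) ∧
      (∑ j, ∑ k : Fin m, (2 * ((k : ℕ) : ℝ) + 1) * zz j k) ≤ (m : ℝ) ^ 2 ∧
      K = ∑ j, ∑ k : Fin m, Om * σ j / m * x j * zz j k :=
    ⟨z, hz01, hcosttot, hval⟩
  have hKβ : K ≤ β := hβ.2 hKmem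
  have hcb : K ≤ b - μv := by linarith [hfeas]
  have hcant := cantelli P Y hYL2 hYmean V hYsq K hKpos
  have hsubset : {ω | (∑ j, a j ω * x j) ≤ b}ᶜ ⊆ {ω | K ≤ Y ω} := by
    intro ω hω
    simp only [Set.mem_compl_iff, Set.mem_setOf_eq, not_le] at hω
    show K ≤ Y ω
    rw [hYdef]
    simp only
    linarith
  have h6 : (P {ω | (∑ j, a j ω * x j) ≤ b}ᶜ).toReal ≤ V/(V+K^2) :=
    le_trans (ENNReal.toReal_mono (measure_ne_top _ _) (measure_mono hsubset)) hcant
  have h7 : (P {ω | (∑ j, a j ω * x j) ≤ b}).toReal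
      + (P {ω | (∑ j, a j ω * x j) ≤ b}ᶜ).toReal = 1 := by
    rw [← ENNReal.toReal_add (measure_ne_top _ _) (measure_ne_top _ _),
      measure_add_measure_compl hms, measure_univ, ENNReal.toReal_one]
  have hK2 : K^2 = ρ/(1-ρ) * (V * s') / (m:ℝ)^2 := by
    rw [hKdef, div_pow, mul_pow, Real.sq_sqrt (mul_pos hVpos hs').le, hOm,
      Real.sq_sqrt (div_pos hρ hρ1).le]
  have hiq : ρ - (1 - V/(V+K^2)) = ρ*(1-ρ)/(4*(m:ℝ)^2/n - ρ) := by
    rw [hK2, hs'def]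
    exact alg_id ρ V (m:ℝ) (n:ℝ) hρ hρ1 hVpos hmpos hnpos hlt hqpos
  linarith [h6, h7, hiq]
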